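/- The number of permutations of length n avoiding the vincular pattern 23-1 satisfies the Bell number recurrence via prefix refinement: letting t(n,a) denote the number of 23-1-avoiding permutations of length n with first letter a, we have t(n,1) = Σ_{b=1}^{n−1} t(n−1,b) and t(n,a) = Σ_{b=1}^{a−1} t(n−1,b) for 1 < a ≤ n, with t(1,1) = 1. -/

import Mathlib

/-- Containment of 23-1. -/
def Contains23d1 {n : ℕ} (π : Equiv.Perm (Fin n)) : Prop :=
  ∃ (i j : Fin n) (h : (i : ℕ) + 1 < n), (i : ℕ) + 1 < (j : ℕ) ∧
    π j < π i ∧ π i < π ⟨(i : ℕ) + 1, h⟩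

/-- `tCount n a` is the number of `23-1`-avoiding permutations of length `n` whose
first letter is `a` (1-based). -/
noncomputable def tCount (n a : ℕ) : ℕ :=
  Nat.card {π : Equiv.Perm (Fin n) //
    ¬ Contains23d1 π ∧ ∃ h : 0 < n, ((π ⟨0, h⟩ : Fin n) : ℕ) + 1 = a}

namespace Stmt19Aux

open Equiv Finset

variable {m : ℕ}

/-- Insert `v` at the front of `σ` (positions shifted by one, values `≥ v` shifted up). -/
def ins (v : Fin (m+1)) (σ : Perm (Fin m)) : Perm (Fin (m+1)) :=
  (finSuccEquiv m).trans (σ.optionCongr.trans (finSuccEquiv' v).symm)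

@[simp] lemma ins_zero (v : Fin (m+1)) (σ : Perm (Fin m)) : ins v σ 0 = v := by
  simp [ins]

@[simp] lemma ins_succ (v : Fin (m+1)) (σ : Perm (Fin m)) (i : Fin m) :
    ins v σ i.succ = v.succAbove (σ i) := by
  simp [ins, finSuccEquiv'_symm_some]

/-- Delete the first entry of `π` (and its value), relabelling monotonically. -/
def del (π : Perm (Fin (m+1))) : Perm (Fin m) :=
  Equiv.removeNone ((finSuccEquiv m).symm.trans (π.trans (finSuccEquiv' (π 0))))

lemma del_spec (π : Perm (Fin (m+1))) (i : Fin m) :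
    (π 0).succAbove (del π i) = π i.succ := by
  set E := (finSuccEquiv m).symm.trans (π.trans (finSuccEquiv' (π 0))) with hE
  have hsome : E (some i) = finSuccEquiv' (π 0) (π i.succ) := by simp [hE]
  have hne : π i.succ ≠ π 0 := fun h => Fin.succ_ne_zero i (π.injective h)
  have h2 : ∃ x, finSuccEquiv' (π 0) (π i.succ) = some x := by
    rcases h : finSuccEquiv' (π 0) (π i.succ) with _ | x
    · exfalso
      apply hne
      have := congrArg (finSuccEquiv' (π 0)).symm h
      simpa [finSuccEquiv'_symm_none] using this
    · exact ⟨x, rfl⟩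
  have h3 := Equiv.removeNone_some E (by rw [hsome]; exact h2)
  have h4 := congrArg (finSuccEquiv' (π 0)).symm (h3.trans hsome)
  simpa [del, finSuccEquiv'_symm_some, hE] using h4

lemma ins_del (π : Perm (Fin (m+1))) : ins (π 0) (del π) = π := by
  apply Equiv.ext
  intro j
  refine Fin.cases ?_ ?_ j
  · simp
  · intro i
    rw [ins_succ, del_spec]

lemma del_ins (v : Fin (m+1)) (σ : Perm (Fin m)) : del (ins v σ) = σ := by
  apply Equiv.ext
  intro i
  have h := del_spec (ins v σ) i
  rw [ins_succ, ins_zero] at h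
  exact (Fin.strictMono_succAbove v).injective h

lemma succAbove_lt_self_iff (v : Fin (m+1)) (w : Fin m) :
    v.succAbove w < v ↔ (w : ℕ) < (v : ℕ) := by
  rcases lt_or_ge (w.castSucc) v with h | h
  · rw [Fin.succAbove_of_castSucc_lt _ _ h]
    exact Iff.rfl
  · rw [Fin.succAbove_of_le_castSucc _ _ h]
    simp only [Fin.le_def, Fin.lt_def, Fin.coe_castSucc, Fin.val_succ] at h ⊢
    omega

lemma lift (π : Perm (Fin (m+1))) (hc : Contains23d1 (del π)) : Contains23d1 π := by
  obtain ⟨i, j, h1, h2, h3, h4⟩ := hc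
  have hsucc : ((i.succ : Fin (m+1)) : ℕ) + 1 < m + 1 := by simp; omega
  refine ⟨i.succ, j.succ, hsucc, by simp; omega, ?_, ?_⟩
  · rw [← del_spec, ← del_spec]
    exact Fin.succAbove_lt_succAbove_iff.2 h3
  · have hmk : (⟨((i.succ : Fin (m+1)) : ℕ) + 1, hsucc⟩ : Fin (m+1)) =
        (⟨(i : ℕ) + 1, h1⟩ : Fin m).succ := by
      simp [Fin.ext_iff]
    rw [hmk, ← del_spec, ← del_spec]
    exact Fin.succAbove_lt_succAbove_iff.2 h4

lemma first_lt (π : Perm (Fin (m+1))) (hC : ¬ Contains23d1 π) (hv : π 0 ≠ 0) :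
    ∃ h1 : 1 < m + 1, π ⟨1, h1⟩ < π 0 := by
  have hm : 1 ≤ m := by
    rcases Nat.eq_zero_or_pos m with h | h
    · subst h
      exfalso
      apply hv
      apply Fin.ext
      have := (π 0).isLt
      omega
    · omega
  have h1 : 1 < m + 1 := by omega
  refine ⟨h1, ?_⟩
  by_contra hlt
  push_neg at hlt
  have hne : π ⟨1, h1⟩ ≠ π 0 := fun h => by
    have := π.injective h
    simp [Fin.ext_iff] at this
  have hgt : π 0 < π ⟨1, h1⟩ := lt_of_le_of_ne hlt (Ne.symm hne)
  set j := π.symm 0 with hj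
  have hπj : π j = 0 := π.apply_symm_apply 0
  have hj0 : (j : ℕ) ≠ 0 := by
    intro h
    have : j = 0 := Fin.ext h
    rw [this] at hπj
    exact hv hπj
  have hj1 : (j : ℕ) ≠ 1 := by
    intro h
    have : j = ⟨1, h1⟩ := Fin.ext h
    rw [this] at hπj
    rw [hπj] at hgt
    exact absurd hgt (Fin.not_lt_zero _)
  apply hC
  have hz : ((0 : Fin (m+1)) : ℕ) = 0 := rfl
  refine ⟨0, j, by omega, by omega, ?_, ?_⟩
  · rw [hπj]
    exact Fin.pos_of_ne_zero hv
  · have : (⟨((0 : Fin (m+1)) : ℕ) + 1, by omega⟩ : Fin (m+1)) = ⟨1, h1⟩ := by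
      simp [Fin.ext_iff]
    rw [this]
    exact hgt

lemma project (π : Perm (Fin (m+1))) (hc : Contains23d1 π)
    (hgood : ∀ h1 : 1 < m + 1, π 0 < π ⟨1, h1⟩ → π 0 = 0) :
    Contains23d1 (del π) := by
  obtain ⟨i, j, h, hij, hji, hmid⟩ := hc
  have hi0 : (i : ℕ) ≠ 0 := by
    intro hi
    have hi' : i = 0 := Fin.ext hi
    have h1 : 1 < m + 1 := by omega
    have hmk : (⟨(i : ℕ) + 1, h⟩ : Fin (m+1)) = ⟨1, h1⟩ := by simp [Fin.ext_iff, hi]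
    have hπi : π i = π 0 := by rw [hi']
    have h0 : π 0 = 0 := hgood h1 (by rw [← hπi, ← hmk]; exact hmid)
    have hlt0 : π j < 0 := by rw [← h0, ← hπi]; exact hji
    exact absurd hlt0 (Fin.not_lt_zero _)
  have hjlt : (j : ℕ) < m + 1 := j.isLt
  have hilt : (i : ℕ) + 1 < m + 1 := h
  set i₀ : Fin m := ⟨(i : ℕ) - 1, by omega⟩ with hi₀
  set j₀ : Fin m := ⟨(j : ℕ) - 1, by omega⟩ with hj₀
  have his : i = i₀.succ := Fin.ext (by simp [hi₀]; omega)
  have hjs : j = j₀.succ := Fin.ext (by simp [hj₀]; omega)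
  have hi1 : (i₀ : ℕ) + 1 < m := by simp [hi₀]; omega
  refine ⟨i₀, j₀, hi1, by simp [hi₀, hj₀]; omega, ?_, ?_⟩
  · rw [← Fin.succAbove_lt_succAbove_iff (p := π 0), del_spec, del_spec, ← his, ← hjs]
    exact hji
  · rw [← Fin.succAbove_lt_succAbove_iff (p := π 0), del_spec, del_spec, ← his]
    have hmk : (⟨(i₀ : ℕ) + 1, hi1⟩ : Fin m).succ = ⟨(i : ℕ) + 1, h⟩ := by
      simp [Fin.ext_iff, hi₀]; omega
    rw [hmk]
    exact hmid

lemma card_v (m : ℕ) (v : Fin (m+2)) :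
    Nat.card {π : Perm (Fin (m+2)) // ¬ Contains23d1 π ∧ π 0 = v} =
      Nat.card {σ : Perm (Fin (m+1)) //
        ¬ Contains23d1 σ ∧ ((v : ℕ) = 0 ∨ (σ 0 : ℕ) < (v : ℕ))} := by
  apply Nat.card_congr
  refine ⟨fun x => ⟨del x.1, ?_, ?_⟩, fun y => ⟨ins v y.1, ?_, ins_zero v y.1⟩, ?_, ?_⟩
  · exact fun hc => x.2.1 (lift x.1 hc)
  · obtain ⟨π, hπ, hv⟩ := x
    rcases Nat.eq_zero_or_pos (v : ℕ) with h | h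
    · exact Or.inl h
    · right
      have hvne : π 0 ≠ 0 := by
        rw [hv]; intro h0; rw [h0] at h; simp at h
      obtain ⟨h1, hlt⟩ := first_lt π hπ hvne
      have hone : (⟨1, h1⟩ : Fin (m+2)) = (0 : Fin (m+1)).succ := by simp [Fin.ext_iff]
      rw [hone, ← del_spec] at hlt
      rw [hv] at hlt
      exact (succAbove_lt_self_iff v _).1 hlt
  · obtain ⟨σ, hσ, hcond⟩ := y
    intro hc
    apply hσ
    have hgood : ∀ h1 : 1 < m + 2, ins v σ 0 < ins v σ ⟨1, h1⟩ → ins v σ 0 = 0 := by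
      intro h1 hlt
      rcases hcond with h | h
      · rw [ins_zero]; exact Fin.ext h
      · exfalso
        have hone : (⟨1, h1⟩ : Fin (m+2)) = (0 : Fin (m+1)).succ := by simp [Fin.ext_iff]
        rw [hone, ins_succ, ins_zero] at hlt
        have := (succAbove_lt_self_iff v (σ 0)).2 h
        exact absurd (lt_trans hlt this) (lt_irrefl _)
    have := project (ins v σ) hc hgood
    rwa [del_ins] at this
  · rintro ⟨π, hπ, hv⟩
    apply Subtype.ext
    simp only
    rw [← hv]
    exact ins_del π
  · rintro ⟨σ, hσ, hcond⟩
    apply Subtype.ext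
    simp only
    exact del_ins v σ

lemma card_partition (k : ℕ) (p : Perm (Fin (k+1)) → Prop) (q : Fin (k+1) → Prop)
    [DecidablePred q] :
    Nat.card {σ : Perm (Fin (k+1)) // p σ ∧ q (σ 0)} =
      ∑ b ∈ Finset.univ.filter q, Nat.card {σ : Perm (Fin (k+1)) // p σ ∧ σ 0 = b} := by
  classical
  rw [Nat.card_eq_fintype_card, Fintype.card_subtype]
  rw [Finset.card_eq_sum_card_fiberwise
    (f := fun σ : Perm (Fin (k+1)) => σ 0) (t := Finset.univ.filter q)
    (fun σ hσ => Finset.mem_filter.mpr ⟨Finset.mem_univ _, (Finset.mem_filter.mp hσ).2.2⟩)]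
  apply Finset.sum_congr rfl
  intro b hb
  simp only [Finset.mem_filter, Finset.mem_univ, true_and] at hb
  rw [Nat.card_eq_fintype_card, Fintype.card_subtype, Finset.filter_filter]
  congr 1
  apply Finset.filter_congr
  intro σ _
  constructor
  · rintro ⟨⟨hp, _⟩, he⟩; exact ⟨hp, he⟩
  · rintro ⟨hp, he⟩; exact ⟨⟨hp, he ▸ hb⟩, he⟩

lemma tCount_eq (k a : ℕ) :
    tCount (k+1) a =
      Nat.card {π : Perm (Fin (k+1)) // ¬ Contains23d1 π ∧ ((π 0 : Fin (k+1)) : ℕ) + 1 = a} := by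
  unfold tCount
  apply Nat.card_congr
  apply Equiv.subtypeEquivRight
  intro π
  apply and_congr_right
  intro _
  constructor
  · rintro ⟨h, hh⟩
    have : (⟨0, h⟩ : Fin (k+1)) = 0 := by simp [Fin.ext_iff]
    rwa [this] at hh
  · intro hh
    refine ⟨Nat.succ_pos k, ?_⟩
    have : (⟨0, Nat.succ_pos k⟩ : Fin (k+1)) = 0 := by simp [Fin.ext_iff]
    rwa [this]

lemma tCount_eq' (k : ℕ) (v : Fin (k+1)) :
    tCount (k+1) ((v : ℕ) + 1) =
      Nat.card {π : Perm (Fin (k+1)) // ¬ Contains23d1 π ∧ π 0 = v} := by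
  rw [tCount_eq]
  apply Nat.card_congr
  apply Equiv.subtypeEquivRight
  intro π
  apply and_congr_right
  intro _
  simp [Fin.ext_iff]

lemma recur (m : ℕ) (v : Fin (m+2)) :
    tCount (m+2) ((v : ℕ) + 1) =
      ∑ b ∈ Finset.univ.filter (fun b : Fin (m+1) => (v : ℕ) = 0 ∨ (b : ℕ) < (v : ℕ)),
        tCount (m+1) ((b : ℕ) + 1) := by
  rw [tCount_eq', card_v,
    card_partition m (fun σ => ¬ Contains23d1 σ) (fun b => (v : ℕ) = 0 ∨ (b : ℕ) < (v : ℕ))]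
  apply Finset.sum_congr rfl
  intro b _
  rw [tCount_eq']

lemma sum_filter_lt (k c : ℕ) (g : ℕ → ℕ) (hc : c ≤ k + 1) :
    ∑ b ∈ Finset.univ.filter (fun b : Fin (k+1) => (b : ℕ) < c), g (b : ℕ) =
      ∑ x ∈ Finset.range c, g x := by
  classical
  rw [Finset.sum_filter]
  rw [Fin.sum_univ_eq_sum_range (fun b => if b < c then g b else 0) (k+1)]
  rw [← Finset.sum_filter]
  congr 1
  ext x
  simp only [Finset.mem_filter, Finset.mem_range]
  omega

lemma sum_Icc_one (c : ℕ) (f : ℕ → ℕ) :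
    ∑ b ∈ Finset.Icc 1 c, f b = ∑ x ∈ Finset.range c, f (x + 1) := by
  rw [← Finset.Ico_add_one_right_eq_Icc, Finset.sum_Ico_eq_sum_range]
  have h : c + 1 - 1 = c := by omega
  rw [h]
  exact Finset.sum_congr rfl fun x _ => by rw [Nat.add_comm]

end Stmt19Aux

/-- The prefix refinement recurrence for `23-1`-avoiding permutations (first letters
written 1-based): `t(n,1) = Σ_{b=1}^{n-1} t(n-1,b)`, `t(n,a) = Σ_{b=1}^{a-1} t(n-1,b)`
for `1 < a ≤ n`, and `t(1,1) = 1`. -/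
theorem stmt19 :
    (∀ n : ℕ, 2 ≤ n → tCount n 1 = ∑ b ∈ Finset.Icc 1 (n - 1), tCount (n - 1) b) ∧
    (∀ n a : ℕ, 1 < a → a ≤ n → tCount n a = ∑ b ∈ Finset.Icc 1 (a - 1), tCount (n - 1) b) ∧
    tCount 1 1 = 1 := by
  refine ⟨?_, ?_, ?_⟩
  · intro n hn
    obtain ⟨m, rfl⟩ : ∃ m, n = m + 2 := ⟨n - 2, by omega⟩
    have h := Stmt19Aux.recur m 0
    have hz : ((0 : Fin (m+2)) : ℕ) = 0 := rfl
    rw [hz] at h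
    have hfilter : Finset.univ.filter
        (fun b : Fin (m+1) => (0 : ℕ) = 0 ∨ (b : ℕ) < 0) = Finset.univ := by
      apply Finset.filter_true_of_mem
      intro b _
      exact Or.inl rfl
    rw [hfilter] at h
    have hsimp : m + 2 - 1 = m + 1 := by omega
    rw [hsimp, h, Stmt19Aux.sum_Icc_one (m+1) (tCount (m+1))]
    exact Fin.sum_univ_eq_sum_range (fun x => tCount (m+1) (x + 1)) (m+1)
  · intro n a ha han
    obtain ⟨m, rfl⟩ : ∃ m, n = m + 2 := ⟨n - 2, by omega⟩
    set v : Fin (m+2) := ⟨a - 1, by omega⟩ with hv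
    have hva : (v : ℕ) + 1 = a := by simp [hv]; omega
    have h := Stmt19Aux.recur m v
    rw [hva] at h
    have hfilter : Finset.univ.filter
        (fun b : Fin (m+1) => (v : ℕ) = 0 ∨ (b : ℕ) < (v : ℕ)) =
        Finset.univ.filter (fun b : Fin (m+1) => (b : ℕ) < a - 1) := by
      apply Finset.filter_congr
      intro b _
      simp [hv]
      omega
    rw [hfilter] at h
    have hvv : (v : ℕ) = a - 1 := rfl
    rw [h]
    have hsimp : m + 2 - 1 = m + 1 := by omega
    rw [hsimp, Stmt19Aux.sum_Icc_one (a-1) (tCount (m+1))]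
    exact Stmt19Aux.sum_filter_lt m (a-1) (fun x => tCount (m+1) (x+1)) (by omega)
  · have hall : ∀ π : Equiv.Perm (Fin 1),
        ¬ Contains23d1 π ∧ ∃ h : 0 < 1, ((π ⟨0, h⟩ : Fin 1) : ℕ) + 1 = 1 := by
      intro π
      constructor
      · rintro ⟨i, j, h, -⟩
        omega
      · refine ⟨Nat.one_pos, ?_⟩
        have : (π ⟨0, Nat.one_pos⟩ : Fin 1) = 0 := Subsingleton.elim _ _
        rw [this]
        simp
    unfold tCount
    rw [Nat.card_congr (Equiv.subtypeUnivEquiv hall)]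
    simp [Nat.card_eq_fintype_card]
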